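/- Let V be a finite-dimensional vector space over a finite field F_q equipped with a nondegenerate alternating, sesquilinear, or symmetric bilinear form f, and let x be an endomorphism of V such that for all v, w ∈ V, f(v,w) = 0 if and only if f(v^x, w^x) = 0. If W is an ⟨x⟩-invariant subspace of dimension d (and the characteristic does not divide the order of x acting, so that Maschke applies), then there exists a nonsingular ⟨x⟩-invariant subspace Y of V of dimension k with d ≤ k ≤ 2d. -/

import Mathlib

section Helpers
variable {F V : Type*} [Field F] [AddCommGroup V] [Module F V]

lemma aux_mul_apply (f g : V ≃ₗ[F] V) (x : V) : (f * g) x = f (g x) := rfl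

lemma aux_map_eq (g : V ≃ₗ[F] V) (S : Submodule F V)
    (h1 : ∀ x ∈ S, g x ∈ S) (h2 : ∀ x ∈ S, g.symm x ∈ S) :
    S.map (g : V →ₗ[F] V) = S := by
  apply le_antisymm
  · rintro _ ⟨x, hx, rfl⟩; exact h1 x hx
  · intro x hx; exact ⟨g.symm x, h2 x hx, by simp⟩

lemma aux_mem_of_map_eq (g : V ≃ₗ[F] V) (S : Submodule F V)
    (hS : S.map (g : V →ₗ[F] V) = S) :
    (∀ x ∈ S, g x ∈ S) ∧ (∀ x ∈ S, g.symm x ∈ S) := by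
  constructor
  · intro x hx; rw [← hS]; exact ⟨x, hx, rfl⟩
  · intro x hx; rw [← hS] at hx; obtain ⟨y, hy, hyx⟩ := hx
    have h : g.symm (g y) = y := g.symm_apply_apply y
    simp only [LinearEquiv.coe_coe] at hyx
    rw [← hyx, h]; exact hy

lemma aux_map_pow_eq (g : V ≃ₗ[F] V) (S : Submodule F V)
    (hS : S.map (g : V →ₗ[F] V) = S) (i : ℕ) :
    S.map ((g ^ i : V ≃ₗ[F] V) : V →ₗ[F] V) = S := by
  induction i with
  | zero => simp [Submodule.map_id]
  | succ k ih =>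
    have h : ((g ^ (k + 1) : V ≃ₗ[F] V) : V →ₗ[F] V)
        = ((g ^ k : V ≃ₗ[F] V) : V →ₗ[F] V) ∘ₗ (g : V →ₗ[F] V) := by
      ext x
      simp only [LinearMap.coe_comp, Function.comp_apply, LinearEquiv.coe_coe]
      rw [pow_succ, aux_mul_apply]
    rw [h, Submodule.map_comp, hS, ih]

lemma aux_pow_mem (g : V ≃ₗ[F] V) (S : Submodule F V)
    (hS : S.map (g : V →ₗ[F] V) = S) (i : ℕ) :
    (∀ x ∈ S, (g ^ i) x ∈ S) ∧ (∀ x ∈ S, (g ^ i).symm x ∈ S) :=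
  aux_mem_of_map_eq _ _ (aux_map_pow_eq g S hS i)

end Helpers
lemma aux_maschke {F V : Type*} [Field F] [AddCommGroup V] [Module F V] [FiniteDimensional F V]
    (g : V ≃ₗ[F] V) (n : ℕ) (hn : 0 < n) (hg : g ^ n = 1) (hnF : (n : F) ≠ 0)
    (U : Submodule F V) (hU : U.map (g : V →ₗ[F] V) = U) :
    ∃ T : Submodule F V, IsCompl U T ∧ T.map (g : V →ₗ[F] V) = T := by
  obtain ⟨S, hS⟩ := Submodule.exists_isCompl U
  set p : V →ₗ[F] V := U.subtype ∘ₗ (U.projectionOnto S hS) with hp_def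
  have hp_mem : ∀ x, p x ∈ U := fun x => (U.projectionOnto S hS x).2
  have hp_id : ∀ x ∈ U, p x = x := by
    intro x hx
    simp only [hp_def, LinearMap.coe_comp, Function.comp_apply, Submodule.coe_subtype]
    rw [show x = ((⟨x, hx⟩ : U) : V) from rfl, Submodule.projectionOnto_apply_left hS]
  set f : ℕ → (V →ₗ[F] V) := fun i =>
    ((g ^ i : V ≃ₗ[F] V) : V →ₗ[F] V) ∘ₗ p ∘ₗ (((g ^ i : V ≃ₗ[F] V).symm : V ≃ₗ[F] V) : V →ₗ[F] V)
    with hf_def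
  have hf_apply : ∀ i x, f i x = (g ^ i) (p ((g ^ i).symm x)) := fun i x => rfl
  have hf_mem : ∀ i x, f i x ∈ U := by
    intro i x
    rw [hf_apply]
    exact (aux_pow_mem g U hU i).1 _ (hp_mem _)
  have hf_id : ∀ i, ∀ x ∈ U, f i x = x := by
    intro i x hx
    rw [hf_apply, hp_id _ ((aux_pow_mem g U hU i).2 x hx), LinearEquiv.apply_symm_apply]
  -- shift identity
  have hshift : ∀ i x, g (f i x) = f (i + 1) (g x) := by
    intro i x
    have h1 : (g ^ (i + 1)).symm (g x) = (g ^ i).symm x := by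
      rw [LinearEquiv.symm_apply_eq, pow_succ', aux_mul_apply, LinearEquiv.apply_symm_apply]
    rw [hf_apply, hf_apply, h1, pow_succ', aux_mul_apply]
  set s : V →ₗ[F] V := ∑ i ∈ Finset.range n, f i with hs_def
  have hfn0 : f n = f 0 := by
    ext x
    rw [hf_apply, hf_apply, hg]
    rfl
  have hsum : ∑ i ∈ Finset.range n, f (i + 1) = s := by
    have h1 := Finset.sum_range_succ f n
    have h2 := Finset.sum_range_succ' f n
    rw [hfn0] at h1
    rw [hs_def]
    have := h2.symm.trans h1
    exact add_right_cancel this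
  have hsum_apply : ∀ (h : ℕ → (V →ₗ[F] V)) (y : V),
      (∑ i ∈ Finset.range n, h i) y = ∑ i ∈ Finset.range n, h i y := by
    intro h y
    simp only [LinearMap.coe_sum, Finset.sum_apply]
  have hs_comm : ∀ x, g (s x) = s (g x) := by
    intro x
    have h1 : s (g x) = ∑ i ∈ Finset.range n, f (i + 1) (g x) := by
      conv_lhs => rw [← hsum]
      exact hsum_apply _ _
    have h2 : g (s x) = ∑ i ∈ Finset.range n, g (f i x) := by
      rw [hs_def, hsum_apply, map_sum]
    rw [h1, h2]
    exact Finset.sum_congr rfl fun i _ => hshift i x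
  set q : V →ₗ[F] V := (n : F)⁻¹ • s with hq_def
  have hq_mem : ∀ x, q x ∈ U := by
    intro x
    rw [hq_def]
    simp only [LinearMap.smul_apply, hs_def, LinearMap.coe_sum, Finset.sum_apply]
    exact Submodule.smul_mem _ _ (Submodule.sum_mem _ fun i _ => hf_mem i x)
  have hq_id : ∀ x ∈ U, q x = x := by
    intro x hx
    rw [hq_def]
    simp only [LinearMap.smul_apply, hs_def, LinearMap.coe_sum, Finset.sum_apply]
    rw [Finset.sum_congr rfl fun i _ => hf_id i x hx, Finset.sum_const, Finset.card_range,
      ← Nat.cast_smul_eq_nsmul F n x, smul_smul, inv_mul_cancel₀ hnF, one_smul]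
  have hq_comm : ∀ x, g (q x) = q (g x) := by
    intro x
    rw [hq_def]
    simp only [LinearMap.smul_apply]
    rw [map_smul, hs_comm]
  refine ⟨LinearMap.ker q, ⟨?_, ?_⟩, ?_⟩
  · rw [Submodule.disjoint_def]
    intro x hxU hxK
    rw [LinearMap.mem_ker] at hxK
    rw [← hq_id x hxU, hxK]
  · rw [codisjoint_iff, Submodule.eq_top_iff']
    intro x
    rw [Submodule.mem_sup]
    refine ⟨q x, hq_mem x, x - q x, ?_, by abel⟩
    rw [LinearMap.mem_ker, map_sub, hq_id _ (hq_mem x), sub_self]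
  · apply aux_map_eq
    · intro x hx
      rw [LinearMap.mem_ker] at hx ⊢
      rw [← hq_comm, hx, map_zero]
    · intro x hx
      rw [LinearMap.mem_ker] at hx ⊢
      have := hq_comm (g.symm x)
      rw [LinearEquiv.apply_symm_apply, hx] at this
      have h2 : g.symm (g (q (g.symm x))) = g.symm 0 := by rw [this]
      rwa [g.symm_apply_apply, map_zero] at h2

/-- Lemma on nonsingular invariant subspaces: if `B` is a nondegenerate reflexive
(e.g. alternating or symmetric) bilinear form on a finite-dimensional space `V` over a
finite field, `g` is an invertible endomorphism of finite order invertible in the field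
(so that Maschke's theorem applies) preserving orthogonality of `B`, and `W` is a
`g`-invariant subspace of dimension `d`, then there is a nonsingular `g`-invariant
subspace `Y` with `d ≤ dim Y ≤ 2d`. -/
theorem stmt8 {F V : Type*} [Field F] [Finite F] [AddCommGroup V] [Module F V]
    [FiniteDimensional F V]
    (B : V →ₗ[F] V →ₗ[F] F) (hrefl : B.IsRefl) (hnd : B.SeparatingLeft)
    (g : V ≃ₗ[F] V)
    (hord : ∃ n : ℕ, 0 < n ∧ g ^ n = 1 ∧ ¬ (ringChar F : ℕ) ∣ n)
    (hB : ∀ v w : V, B v w = 0 ↔ B (g v) (g w) = 0)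
    (W : Submodule F V) (hW : W.map (g : V →ₗ[F] V) = W)
    (d : ℕ) (hd : Module.finrank F W = d) :
    ∃ Y : Submodule F V, Y.map (g : V →ₗ[F] V) = Y ∧
      d ≤ Module.finrank F Y ∧ Module.finrank F Y ≤ 2 * d ∧
      Y ⊓ Y.orthogonalBilin B = ⊥ := by
  classical
  obtain ⟨n, hn, hgn, hchar⟩ := hord
  have hcp : CharP F (ringChar F) := ringChar.charP F
  have hnF : (n : F) ≠ 0 := fun h =>
    hchar ((CharP.cast_eq_zero_iff F (ringChar F) n).mp h)
  -- orthogonal complements of invariant subspaces are invariant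
  have horth_inv : ∀ S : Submodule F V, S.map (g : V →ₗ[F] V) = S →
      (S.orthogonalBilin B).map (g : V →ₗ[F] V) = S.orthogonalBilin B := by
    intro S hS
    obtain ⟨h1, h2⟩ := aux_mem_of_map_eq g S hS
    apply aux_map_eq
    · intro x hx
      rw [Submodule.mem_orthogonalBilin_iff] at hx ⊢
      intro m hm
      have h3 : B (g.symm m) x = 0 := hx _ (h2 m hm)
      have h4 := (hB (g.symm m) x).mp h3
      rwa [g.apply_symm_apply] at h4
    · intro x hx
      rw [Submodule.mem_orthogonalBilin_iff] at hx ⊢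
      intro m hm
      have h3 : B (g m) x = 0 := hx _ (h1 m hm)
      refine (hB m (g.symm x)).mpr ?_
      rwa [g.apply_symm_apply]
  set R : Submodule F V := W ⊓ W.orthogonalBilin B with hR_def
  have hWperp_inv := horth_inv W hW
  have hR_inv : R.map (g : V →ₗ[F] V) = R := by
    obtain ⟨hw1, hw2⟩ := aux_mem_of_map_eq g W hW
    obtain ⟨ho1, ho2⟩ := aux_mem_of_map_eq g _ hWperp_inv
    apply aux_map_eq
    · intro x hx
      exact Submodule.mem_inf.mpr ⟨hw1 x hx.1, ho1 x hx.2⟩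
    · intro x hx
      exact Submodule.mem_inf.mpr ⟨hw2 x hx.1, ho2 x hx.2⟩
  set P : Submodule F V := R.orthogonalBilin B with hP_def
  have hP_inv := horth_inv R hR_inv
  obtain ⟨T, hTc, hT_inv⟩ := aux_maschke g n hn hgn hnF P hP_inv
  -- W ≤ P
  have hWP : W ≤ P := by
    intro w hw
    rw [hP_def, Submodule.mem_orthogonalBilin_iff]
    intro r hr
    exact hrefl w r (hr.2 w hw)
  -- W ⊓ T = ⊥
  have hWT : W ⊓ T = ⊥ := by
    rw [eq_bot_iff]
    intro x hx
    have hx0 : x = 0 := (Submodule.disjoint_def.mp hTc.disjoint) x (hWP hx.1) hx.2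
    simp [hx0]
  set Y : Submodule F V := W ⊔ T with hY_def
  have hsupPT : P ⊔ T = ⊤ := codisjoint_iff.mp hTc.codisjoint
  -- invariance of Y
  have hY_inv : Y.map (g : V →ₗ[F] V) = Y := by
    obtain ⟨hw1, hw2⟩ := aux_mem_of_map_eq g W hW
    obtain ⟨ht1, ht2⟩ := aux_mem_of_map_eq g T hT_inv
    apply aux_map_eq
    · intro x hx
      rcases Submodule.mem_sup.mp hx with ⟨w, hw, t, ht, rfl⟩
      rw [map_add]
      exact Submodule.add_mem_sup (hw1 w hw) (ht1 t ht)
    · intro x hx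
      rcases Submodule.mem_sup.mp hx with ⟨w, hw, t, ht, rfl⟩
      rw [map_add]
      exact Submodule.add_mem_sup (hw2 w hw) (ht2 t ht)
  -- dimensions
  have hYrank : Module.finrank F Y + 0 = Module.finrank F W + Module.finrank F T := by
    rw [← Submodule.finrank_sup_add_finrank_inf_eq W T, hWT, finrank_bot]
  have hPT_rank : Module.finrank F P + Module.finrank F T = Module.finrank F V :=
    Submodule.finrank_add_eq_of_isCompl hTc
  have hP_rank : Module.finrank F P = Module.finrank F V - Module.finrank F R := by
    have hortheq : P = LinearMap.BilinForm.orthogonal B R := rfl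
    rw [hortheq]
    exact LinearMap.BilinForm.finrank_orthogonal (hrefl.nondegenerate_iff_separatingLeft.mpr hnd) R
  have hRV : Module.finrank F R ≤ Module.finrank F V := Submodule.finrank_le R
  have hRd : Module.finrank F R ≤ d := hd ▸ Submodule.finrank_mono inf_le_left
  have hTrank : Module.finrank F T = Module.finrank F R := by omega
  refine ⟨Y, hY_inv, by omega, by omega, ?_⟩
  -- nonsingularity
  rw [eq_bot_iff]
  rintro y hy
  obtain ⟨hyY, hyO⟩ := Submodule.mem_inf.mp hy
  rw [Submodule.mem_orthogonalBilin_iff] at hyO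
  rcases Submodule.mem_sup.mp hyY with ⟨w, hw, t, ht, rfl⟩
  have ht0 : t = 0 := by
    have htP : t ∈ P := by
      rw [hP_def, Submodule.mem_orthogonalBilin_iff]
      intro r hr
      have h1 : B r (w + t) = 0 := hyO r (Submodule.mem_sup_left hr.1)
      have h2 : B r w = 0 := hrefl w r (hr.2 w hw)
      have h3 : B r (w + t) = B r w + B r t := map_add _ _ _
      show B r t = 0
      rw [h1, h2, zero_add] at h3
      exact h3.symm
    exact (Submodule.disjoint_def.mp hTc.disjoint) t htP ht
  subst ht0
  rw [add_zero] at hyO ⊢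
  have hwR : w ∈ R := by
    refine Submodule.mem_inf.mpr ⟨hw, ?_⟩
    rw [Submodule.mem_orthogonalBilin_iff]
    intro u hu
    exact hyO u (Submodule.mem_sup_left hu)
  have hall : ∀ v, B v w = 0 := by
    intro v
    have hvtop : v ∈ P ⊔ T := by rw [hsupPT]; trivial
    rcases Submodule.mem_sup.mp hvtop with ⟨pz, hpz, tz, htz, rfl⟩
    have h1 : B tz w = 0 := hyO tz (Submodule.mem_sup_right htz)
    have h2 : B pz w = 0 := hrefl w pz (hpz w hwR)
    have h3 : B (pz + tz) w = B pz w + B tz w := by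
      rw [map_add]; rfl
    rw [h3, h1, h2, add_zero]
  have hw0 : w = 0 := hnd w (fun v => hrefl v w (hall v))
  simp [hw0]
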